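/- arXiv:2508.13089 — 5 statements merged into one kernel-verified Lean document; each statement's English description precedes it below -/
import Mathlib

section
/- Let R be a Boolean ring and Z a subset of R. An element a in R is a supremum of Z with respect to the order x ≤ y iff xy = x if and only if the annihilator of Z is the principal ideal generated by 1 - a. -/
/-- In a Boolean ring, a is a supremum of a subset Z (for the order x ≤ y iff xy = x)
iff the annihilator of Z is the principal ideal generated by 1 - a. -/
theorem stmt_4 (R : Type*) [CommRing R] (hB : ∀ x : R, x * x = x) (Z : Set R) (a : R) :
    ((∀ z ∈ Z, z * a = z) ∧ ∀ b : R, (∀ z ∈ Z, z * b = z) → a * b = a) ↔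
      (∀ b : R, (∀ z ∈ Z, b * z = 0) ↔ b ∈ Ideal.span {1 - a}) := by
  constructor
  · rintro ⟨hub, hlub⟩ b
    constructor
    · intro hb
      rw [Ideal.mem_span_singleton]
      have hc : ∀ z ∈ Z, z * (a * (1 - b)) = z := by
        intro z hz
        linear_combination (1 - b) * hub z hz - hb z hz
      have hl := hlub (a * (1 - b)) hc
      have hab : a * b = 0 := by linear_combination (1 - b) * hB a - hl
      exact ⟨b, by linear_combination hab⟩
    · intro hb z hz
      rw [Ideal.mem_span_singleton] at hb
      obtain ⟨c, rfl⟩ := hb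
      linear_combination -c * hub z hz
  · intro h
    constructor
    · intro z hz
      have h1 : (1 - a) * z = 0 :=
        (h (1 - a)).mpr (Ideal.mem_span_singleton_self _) z hz
      linear_combination -h1
    · intro b hb
      have h1 : (1 - b) ∈ Ideal.span {1 - a} :=
        (h (1 - b)).mp (fun z hz => by linear_combination -(hb z hz))
      obtain ⟨c, hc⟩ := Ideal.mem_span_singleton.mp h1
      linear_combination -a * hc + c * hB a
end

section
/- Let R be a self-injective Boolean ring (R is injective as a module over itself). Then for every ideal I of R, the double annihilator ann(ann(I)) is a principal ideal. -/
/-- In a self-injective Boolean ring, the double annihilator of any ideal is principal. -/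
theorem stmt_5 (R : Type*) [CommRing R] (hB : ∀ x : R, x * x = x)
    [Module.Injective R R] (I : Ideal R) :
    ∃ a : R, I.annihilator.annihilator = Ideal.span {a} := by
  classical
  set A : Ideal R := I.annihilator with hA
  -- the map (x, y) ↦ x + y from I × A to R
  set e : (I × A) →ₗ[R] R := (I.subtype).coprod A.subtype with he_def
  have he_inj : Function.Injective e := by
    rw [← LinearMap.ker_eq_bot]
    rw [Submodule.eq_bot_iff]
    rintro ⟨⟨x, hx⟩, ⟨y, hy⟩⟩ h
    have hxy : x + y = 0 := h
    have hx0 : x = 0 := by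
      have hyx : y * x = 0 := by
        have := Submodule.mem_annihilator.mp hy x hx
        simpa [smul_eq_mul] using this
      have : x * (x + y) = 0 := by rw [hxy, mul_zero]
      have hxx : x * x + x * y = 0 := by rwa [mul_add] at this
      rw [hB x, mul_comm, hyx, add_zero] at hxx
      exact hxx
    have hy0 : y = 0 := by rw [hx0, zero_add] at hxy; exact hxy
    simp [Prod.ext_iff, Subtype.ext_iff, hx0, hy0]
  have hrange : LinearMap.range e = (I ⊔ A : Ideal R) := by
    rw [he_def, LinearMap.range_coprod, Submodule.range_subtype, Submodule.range_subtype]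
  -- the linear map J := I ⊔ A → R, identity on I and zero on A
  set π : (I × A) →ₗ[R] R := I.subtype ∘ₗ LinearMap.fst R I A with hπ
  set eqv : ((I ⊔ A : Ideal R)) ≃ₗ[R] (I × A) :=
    ((LinearEquiv.ofEq _ _ hrange.symm : _ ≃ₗ[R] LinearMap.range e).trans
      (LinearEquiv.ofInjective e he_inj).symm) with heqv
  have heqv_apply : ∀ (p : I × A) (hp : (e p : R) ∈ (I ⊔ A : Ideal R)),
      eqv ⟨e p, hp⟩ = p := by
    intro p hp
    show (LinearEquiv.ofInjective e he_inj).symm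
      ((LinearEquiv.ofEq _ _ hrange.symm) ⟨e p, hp⟩) = p
    apply he_inj
    exact congrArg Subtype.val
      ((LinearEquiv.ofInjective e he_inj).apply_symm_apply
        ((LinearEquiv.ofEq _ _ hrange.symm) ⟨e p, hp⟩))
  set g : ((I ⊔ A : Ideal R)) →ₗ[R] R := π ∘ₗ eqv.toLinearMap with hg
  -- Baer's criterion
  have baer : Module.Baer R R := Module.Baer.of_injective ‹Module.Injective R R›
  obtain ⟨h, H⟩ := baer (I ⊔ A) g
  set a : R := h 1 with ha
  have key1 : ∀ x ∈ I, x * a = x := by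
    intro x hx
    have hmem : x ∈ (I ⊔ A : Ideal R) := Ideal.mem_sup_left hx
    have hx' : x = e (⟨x, hx⟩, 0) := by simp [he_def]
    have hH : h x = g ⟨x, hmem⟩ := H x hmem
    have hgx : g ⟨x, hmem⟩ = x := by
      have heq : (⟨x, hmem⟩ : (I ⊔ A : Ideal R)) =
          ⟨e (⟨x, hx⟩, 0), by rw [← hx']; exact hmem⟩ := Subtype.ext hx'
      rw [hg]
      simp only [LinearMap.coe_comp, Function.comp_apply, LinearEquiv.coe_coe]
      rw [heq, heqv_apply]
      simp [hπ]
    have hha : h x = x * a := by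
      have : h (x • (1 : R)) = x • h 1 := h.map_smul x 1
      simpa [smul_eq_mul, ha] using this
    rw [← hha, hH, hgx]
  have key2 : ∀ y ∈ A, y * a = 0 := by
    intro y hy
    have hmem : y ∈ (I ⊔ A : Ideal R) := Ideal.mem_sup_right hy
    have hy' : y = e (0, ⟨y, hy⟩) := by simp [he_def]
    have hH : h y = g ⟨y, hmem⟩ := H y hmem
    have hgy : g ⟨y, hmem⟩ = 0 := by
      have heq : (⟨y, hmem⟩ : (I ⊔ A : Ideal R)) =
          ⟨e (0, ⟨y, hy⟩), by rw [← hy']; exact hmem⟩ := Subtype.ext hy'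
      rw [hg]
      simp only [LinearMap.coe_comp, Function.comp_apply, LinearEquiv.coe_coe]
      rw [heq, heqv_apply]
      simp [hπ]
    have hha : h y = y * a := by
      have : h (y • (1 : R)) = y • h 1 := h.map_smul y 1
      simpa [smul_eq_mul, ha] using this
    rw [← hha, hH, hgy]
  refine ⟨a, le_antisymm ?_ ?_⟩
  · -- ann(ann I) ≤ span a
    intro b hb
    have hba : b - b * a ∈ A := by
      rw [hA, Submodule.mem_annihilator]
      intro x hx
      have : (b - b * a) * x = 0 := by
        have h1 : x * a = x := key1 x hx
        calc (b - b * a) * x = b * x - b * (x * a) := by ring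
          _ = b * x - b * x := by rw [h1]
          _ = 0 := by ring
      simpa [smul_eq_mul] using this
    have hb0 : b * (b - b * a) = 0 := by
      have := Submodule.mem_annihilator.mp hb _ hba
      simpa [smul_eq_mul] using this
    have hsub : b - b * a = 0 := by
      have : b * b - b * b * a = 0 := by
        calc b * b - b * b * a = b * (b - b * a) := by ring
          _ = 0 := hb0
      rwa [hB b] at this
    have hbeq : b = b * a := by linear_combination hsub
    rw [Ideal.mem_span_singleton]
    exact ⟨b, by rw [mul_comm]; exact hbeq⟩
  · -- span a ≤ ann(ann I)
    rw [Ideal.span_le, Set.singleton_subset_iff]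
    rw [SetLike.mem_coe, Submodule.mem_annihilator]
    intro y hy
    have := key2 y hy
    simpa [smul_eq_mul, mul_comm] using this
end

section
/- Let R be a self-injective Boolean ring. Then R is complete: every nonempty subset of R has a supremum with respect to the partial order x ≤ y iff xy = x. (Proof route: show every annihilator ideal ann(Z) is principal, using that for an ideal I the map I ⊕ ann(I) → R, (x,z) ↦ x, extends to a map R → R given by multiplication by some a, and that ann(ann(ann(I))) = ann(I).) -/
/-- A self-injective Boolean ring is complete: every nonempty subset has a supremum
for the order x ≤ y iff xy = x. -/
theorem stmt_6 (R : Type*) [CommRing R] (hB : ∀ x : R, x * x = x)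
    [Module.Injective R R] :
    ∀ Z : Set R, Z.Nonempty → ∃ a : R, (∀ z ∈ Z, z * a = z) ∧
      ∀ b : R, (∀ z ∈ Z, z * b = z) → a * b = a := by
  intro Z hZ
  set I : Submodule R R := Submodule.span R Z with hI
  set J : Submodule R R := I.annihilator with hJ
  -- I ∩ J = ⊥
  have hdisj : ∀ x : R, x ∈ I → x ∈ J → x = 0 := by
    intro x hxI hxJ
    have := (Submodule.mem_annihilator.mp hxJ) x hxI
    simpa [smul_eq_mul, hB x] using this
  -- the map (I × J) →ₗ R, (x,y) ↦ x + y, is injective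
  set f : (I × J) →ₗ[R] R := I.subtype.coprod J.subtype with hf
  have hfinj : Function.Injective f := by
    intro p q hpq
    simp only [hf, LinearMap.coprod_apply, Submodule.coe_subtype] at hpq
    have h1 : (p.1 : R) - q.1 = (q.2 : R) - p.2 := by linear_combination hpq
    have hmemI : (p.1 : R) - q.1 ∈ I := sub_mem p.1.2 q.1.2
    have hmemJ : (p.1 : R) - q.1 ∈ J := h1 ▸ sub_mem q.2.2 p.2.2
    have h0 := hdisj _ hmemI hmemJ
    have h0' : (q.2 : R) - p.2 = 0 := by rw [← h1]; exact h0
    ext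
    · exact sub_eq_zero.mp h0
    · exact (sub_eq_zero.mp h0').symm
  set g : (I × J) →ₗ[R] R := I.subtype.comp (LinearMap.fst R I J) with hg
  obtain ⟨h, hh⟩ := Module.Injective.out f hfinj g
  set a : R := h 1 with ha
  have hmul : ∀ r : R, h r = r * a := by
    intro r
    have : h (r • (1 : R)) = r • h 1 := h.map_smul r 1
    simpa [smul_eq_mul] using this
  -- for x ∈ I, h x = x; for y ∈ J, h y = 0
  have hIfix : ∀ x ∈ I, x * a = x := by
    intro x hx
    have := hh (⟨x, hx⟩, 0)
    simp only [hf, hg, LinearMap.coprod_apply, LinearMap.comp_apply, LinearMap.fst_apply,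
      Submodule.coe_subtype, Submodule.coe_zero, add_zero] at this
    rw [← hmul, this]
  have hJzero : ∀ y ∈ J, y * a = 0 := by
    intro y hy
    have := hh (0, ⟨y, hy⟩)
    simp only [hf, hg, LinearMap.coprod_apply, LinearMap.comp_apply, LinearMap.fst_apply,
      Submodule.coe_subtype, Submodule.coe_zero, zero_add] at this
    rw [← hmul, this]
  refine ⟨a, fun z hz => hIfix z (Submodule.subset_span hz), ?_⟩
  intro b hb
  have h1b : (1 - b) ∈ J := by
    rw [hJ, Submodule.mem_annihilator]
    intro n hn
    induction hn using Submodule.span_induction with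
    | mem z hz => simp [smul_eq_mul, mul_sub, mul_comm z b ▸ hb z hz, mul_comm]
    | zero => simp
    | add x y _ _ hx hy => rw [smul_add, hx, hy, add_zero]
    | smul r x _ hx => rw [smul_comm, hx, smul_zero]
  have := hJzero _ h1b
  have : (1 - b) * a = 0 := this
  rw [sub_mul, one_mul] at this
  have hba : b * a = a := by linear_combination -this
  rw [mul_comm]; exact hba
end

section
/- Let R be a Boolean ring such that R is a retract, as an R-module, of a product of copies of F_2 (each copy an R-module via a ring map R → F_2). Then R is injective as a module over itself. -/
/-- The product of copies of F_2 indexed by `ι`, regarded as an `R`-module via the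
family of ring maps `f i : R →+* ZMod 2`. -/
def PiF2 {R : Type*} [CommRing R] {ι : Type*} (_f : ι → (R →+* ZMod 2)) : Type _ :=
  ι → ZMod 2

instance {R : Type*} [CommRing R] {ι : Type*} (f : ι → (R →+* ZMod 2)) :
    AddCommGroup (PiF2 f) :=
  inferInstanceAs (AddCommGroup (ι → ZMod 2))

instance {R : Type*} [CommRing R] {ι : Type*} (f : ι → (R →+* ZMod 2)) :
    Module R (PiF2 f) :=
  Module.compHom (ι → ZMod 2) (Pi.ringHom f)

lemma PiF2.smul_apply {R : Type*} [CommRing R] {ι : Type*} (f : ι → (R →+* ZMod 2))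
    (a : R) (v : PiF2 f) (i : ι) : (a • v) i = f i a * v i := rfl

lemma zmod2_cases (a : ZMod 2) : a = 0 ∨ a = 1 := by revert a; decide

/-- Key extension lemma: any map from an ideal of a Boolean ring into `PiF2 f`
extends to all of `R`. -/
lemma baer_piF2 {R : Type*} [CommRing R] (hB : ∀ x : R, x * x = x)
    {ι : Type*} (f : ι → (R →+* ZMod 2)) : Module.Baer R (PiF2 f) := by
  intro I G
  classical
  -- the candidate value
  set c : ι → ZMod 2 := fun i => if ∃ x : I, G x i = 1 then 1 else 0 with hc
  -- basic fact: G y i = f i y * G y i for y ∈ I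
  have fact : ∀ (y : I) (i : ι), G y i = f i (y : R) * G y i := by
    intro y i
    have hy : ((y : R) • y : I) = y := by
      ext; simp [hB]
    calc G y i = G ((y : R) • y) i := by rw [hy]
      _ = f i (y : R) * G y i := by rw [map_smul]; rfl
  refine ⟨{ toFun := fun a => fun i => f i a * c i
            map_add' := ?_
            map_smul' := ?_ }, ?_⟩
  · intro a b; funext i
    show f i (a + b) * c i = f i a * c i + f i b * c i
    rw [map_add, add_mul]
  · intro a b; funext i
    show f i (a * b) * c i = f i a * (f i b * c i)
    rw [map_mul, mul_assoc]
  · intro x mem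
    funext i
    show f i x * c i = G ⟨x, mem⟩ i
    by_cases hex : ∃ y : I, G y i = 1
    · have hci : c i = 1 := by simp only [hc, if_pos hex]
      rw [hci, mul_one]
      obtain ⟨y, hy⟩ := hex
      -- f i y = 1
      have hfy : f i (y : R) = 1 := by
        have := fact y i; rw [hy, mul_one] at this; exact this.symm
      rcases zmod2_cases (f i x) with hfx | hfx
      · rw [hfx]
        have := fact ⟨x, mem⟩ i
        rw [hfx, zero_mul] at this
        exact this.symm
      · rw [hfx]
        rcases zmod2_cases (G ⟨x, mem⟩ i) with hgx | hgx
        · exfalso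
          -- consider w = y - y * x
          set w : I := y - (y : R) • ⟨x, mem⟩ with hw
          have hGw : G w i = 1 := by
            rw [hw, map_sub, map_smul]
            show G y i - f i (y : R) * G ⟨x, mem⟩ i = 1
            rw [hy, hgx, mul_zero, sub_zero]
          have hfw : f i (w : R) = 0 := by
            have : (w : R) = (y : R) - (y : R) * x := rfl
            rw [this, map_sub, map_mul, hfy, hfx, mul_one, sub_self]
          have := fact w i
          rw [hGw, hfw, zero_mul] at this
          exact one_ne_zero this
        · exact hgx.symm
    · have hci : c i = 0 := by simp only [hc, if_neg hex]
      rw [hci, mul_zero]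
      rcases zmod2_cases (G ⟨x, mem⟩ i) with hgx | hgx
      · exact hgx.symm
      · exact absurd ⟨⟨x, mem⟩, hgx⟩ hex

/-- A Boolean ring which is a retract, as a module over itself, of a product of
copies of F_2 (each an R-module via a ring map R → F_2) is self-injective. -/
theorem stmt_8 (R : Type*) [CommRing R] (hB : ∀ x : R, x * x = x)
    {ι : Type*} (f : ι → (R →+* ZMod 2))
    (h : ∃ (s : R →ₗ[R] PiF2 f) (r : PiF2 f →ₗ[R] R), r.comp s = LinearMap.id) :
    Module.Injective R R := by
  obtain ⟨s, r, hrs⟩ := h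
  -- R is Baer: extend a map I → R by going through PiF2 f
  have baer : Module.Baer R R := by
    intro I g
    obtain ⟨G', hG'⟩ := baer_piF2 hB f I (s.comp g)
    refine ⟨r.comp G', fun x mem => ?_⟩
    have := hG' x mem
    calc r (G' x) = r (s (g ⟨x, mem⟩)) := by rw [this]; rfl
      _ = g ⟨x, mem⟩ := by
        have := LinearMap.congr_fun hrs (g ⟨x, mem⟩)
        simpa using this
  exact baer.injective
end

section
/- Let R be a complete Boolean ring (every nonempty subset has a supremum for the order x ≤ y iff xy = x). Then Spec R is extremally disconnected: the closure of every open subset of Spec R is open. (Concretely: if U = ∪_{a ∈ Λ} D(a) is a union of basic opens and c = sup Λ, then the closure of U equals D(c).) -/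
/-- If R is a complete Boolean ring (every nonempty subset has a supremum for the
order x ≤ y iff xy = x), then Spec R is extremally disconnected. -/
theorem stmt_14 (R : Type*) [CommRing R] (hB : ∀ x : R, x * x = x)
    (hc : ∀ Z : Set R, Z.Nonempty → ∃ a : R, (∀ z ∈ Z, z * a = z) ∧
      ∀ b : R, (∀ z ∈ Z, z * b = z) → a * b = a) :
    ExtremallyDisconnected (PrimeSpectrum R) := by
  have hpow : ∀ x : R, ∀ n : ℕ, x ^ (n + 1) = x := by
    intro x n
    induction n with
    | zero => simp
    | succ k ih => rw [pow_succ, ih, hB x]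
  have hnil : ∀ x : R, IsNilpotent x → x = 0 := by
    rintro x ⟨n, hn⟩
    cases n with
    | zero =>
        rw [pow_zero] at hn
        simpa using congrArg (· * x) hn
    | succ k => rw [← hpow x k, hn]
  constructor
  intro U hU
  set Λ : Set R := {a : R | (PrimeSpectrum.basicOpen a : Set (PrimeSpectrum R)) ⊆ U} with hΛ
  have hΛne : Λ.Nonempty := ⟨0, by simp [hΛ]⟩
  obtain ⟨c, hub, hlub⟩ := hc Λ hΛne
  -- U ⊆ D(c)
  have hUc : U ⊆ (PrimeSpectrum.basicOpen c : Set (PrimeSpectrum R)) := by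
    intro p hp
    obtain ⟨v, ⟨a, rfl⟩, hpv, hvU⟩ :=
      (PrimeSpectrum.isTopologicalBasis_basic_opens (R := R)).exists_subset_of_mem_open hp hU
    have haΛ : a ∈ Λ := hvU
    have hac := hub a haΛ
    simp only [SetLike.mem_coe, PrimeSpectrum.mem_basicOpen] at hpv ⊢
    intro hcp
    exact hpv (by rw [← hac]; exact Ideal.mul_mem_left _ _ hcp)
  -- D(c) is closed
  have hclosed : IsClosed (PrimeSpectrum.basicOpen c : Set (PrimeSpectrum R)) := by
    have heq : (PrimeSpectrum.basicOpen c : Set (PrimeSpectrum R))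
        = PrimeSpectrum.zeroLocus {1 - c} := by
      ext p
      simp only [SetLike.mem_coe, PrimeSpectrum.mem_basicOpen, PrimeSpectrum.mem_zeroLocus,
        Set.singleton_subset_iff, SetLike.mem_coe]
      constructor
      · intro h
        have h0 : c * (1 - c) = 0 := by rw [mul_sub, hB, mul_one, sub_self]
        rcases p.isPrime.mem_or_mem (show c * (1 - c) ∈ p.asIdeal by rw [h0]; exact zero_mem _)
          with h1 | h1
        · exact absurd h1 h
        · exact h1
      · intro h hcmem
        exact p.isPrime.ne_top (Ideal.eq_top_iff_one _ |>.mpr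
          (by simpa using p.asIdeal.add_mem h hcmem))
    rw [heq]
    exact PrimeSpectrum.isClosed_zeroLocus _
  -- D(c) ⊆ closure U
  have h2 : (PrimeSpectrum.basicOpen c : Set (PrimeSpectrum R)) ⊆ closure U := by
    intro p hp
    by_contra hpc
    obtain ⟨v, ⟨b, rfl⟩, hpv, hvC⟩ :=
      (PrimeSpectrum.isTopologicalBasis_basic_opens (R := R)).exists_subset_of_mem_open
        (show p ∈ (closure U)ᶜ from hpc) (isClosed_closure.isOpen_compl)
    -- for every a ∈ Λ, a * b = 0
    have hab0 : ∀ a ∈ Λ, a * b = 0 := by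
      intro a ha
      apply hnil
      rw [← PrimeSpectrum.basicOpen_eq_bot_iff, PrimeSpectrum.basicOpen_mul]
      rw [eq_bot_iff]
      intro q hq
      rcases hq with ⟨hqa, hqb⟩
      exact hvC hqb (subset_closure (ha hqa))
    -- c * (1 - b) is an upper bound of Λ
    have hub' : ∀ z ∈ Λ, z * (c * (1 - b)) = z := by
      intro z hz
      linear_combination (1 - b) * hub z hz - hab0 z hz
    have hcb : c * b = 0 := by
      have h3 := hlub _ hub'
      linear_combination (1 - b) * hB c - h3
    simp only [SetLike.mem_coe, PrimeSpectrum.mem_basicOpen] at hp hpv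
    rcases p.isPrime.mem_or_mem (show c * b ∈ p.asIdeal by rw [hcb]; exact zero_mem _) with h | h
    · exact hp h
    · exact hpv h
  have hfin : closure U = (PrimeSpectrum.basicOpen c : Set (PrimeSpectrum R)) :=
    le_antisymm (closure_minimal hUc hclosed) h2
  rw [hfin]
  exact (PrimeSpectrum.basicOpen c).isOpen
end
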